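/- Guarantee of the K29 algorithm (Proposition A.1, feature-map form): Let H be a real Hilbert space and Φ : X × [0,1] → H any map. Suppose a finite transcript (x_1,p_1,y_1),…,(x_T,p_T,y_T) with all p_t, y_t ∈ [0,1] satisfies the K29 invariant: for every t ∈ {1,…,T} and every y ∈ [0,1], (y − p_t)·⟨Φ(x_t,p_t), Σ_{i=1}^{t−1} (y_i − p_i)·Φ(x_i,p_i)⟩ ≤ 0. Then for every w ∈ H: |Σ_{t=1}^T ⟨w, Φ(x_t,p_t)⟩·(y_t − p_t)| ≤ ‖w‖ · √(Σ_{t=1}^T ‖Φ(x_t,p_t)‖² · (y_t − p_t)²). -/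

import Mathlib

open Finset Set
open scoped RealInnerProductSpace

/-- **Guarantee of the K29 algorithm (Proposition A.1, feature-map form).**
Let `H` be a real Hilbert space and `Φ : X × [0,1] → H` any feature map. If a transcript
`(x_t, p_t, y_t)` with `p_t, y_t ∈ [0,1]` satisfies the K29 invariant
(for every `t` and every `y ∈ [0,1]`,
`(y − p_t) * ⟪Φ(x_t,p_t), ∑_{i<t} (y_i − p_i) • Φ(x_i,p_i)⟫ ≤ 0`),
then for every `w ∈ H`,
`|∑_t ⟪w, Φ(x_t,p_t)⟫ (y_t − p_t)| ≤ ‖w‖ * √(∑_t ‖Φ(x_t,p_t)‖² (y_t − p_t)²)`. -/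
theorem k29_guarantee
    {X : Type*} {H : Type*} [NormedAddCommGroup H] [InnerProductSpace ℝ H] [CompleteSpace H]
    (Φ : X → ℝ → H) (T : ℕ) (x : Fin T → X) (p y : Fin T → ℝ)
    (hp : ∀ t, p t ∈ Icc (0:ℝ) 1) (hy : ∀ t, y t ∈ Icc (0:ℝ) 1)
    (hinv : ∀ t : Fin T, ∀ y' ∈ Icc (0:ℝ) 1,
      (y' - p t) *
        ⟪Φ (x t) (p t), ∑ i ∈ Finset.Iio t, (y i - p i) • Φ (x i) (p i)⟫ ≤ 0) :
    ∀ w : H,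
      |∑ t, ⟪w, Φ (x t) (p t)⟫ * (y t - p t)| ≤
        ‖w‖ * Real.sqrt (∑ t, ‖Φ (x t) (p t)‖ ^ 2 * (y t - p t) ^ 2) := by
  intro w
  set f : Fin T → H := fun t => (y t - p t) • Φ (x t) (p t) with hf
  set g : Fin T → ℝ := fun t => ‖Φ (x t) (p t)‖ ^ 2 * (y t - p t) ^ 2 with hg
  set F : ℕ → Finset (Fin T) := fun n => Finset.univ.filter (fun i => (i : ℕ) < n) with hF
  have key : ∀ n : ℕ, ‖∑ i ∈ F n, f i‖ ^ 2 ≤ ∑ i ∈ F n, g i := by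
    intro n
    induction n with
    | zero => simp [hF]
    | succ n ih =>
      by_cases h : n < T
      · have hins : F (n + 1) = insert ⟨n, h⟩ (F n) := by
          ext i
          simp [hF, Nat.lt_succ_iff_lt_or_eq, Fin.ext_iff, or_comm]; omega
        have hnot : (⟨n, h⟩ : Fin T) ∉ F n := by simp [hF]
        rw [hins, Finset.sum_insert hnot, Finset.sum_insert hnot]
        set t : Fin T := ⟨n, h⟩
        have hIio : Finset.Iio t = F n := by
          ext i
          show i ∈ Finset.Iio t ↔ i ∈ Finset.univ.filter (fun j : Fin T => (j : ℕ) < n)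
          rw [Finset.mem_Iio, Finset.mem_filter]
          exact ⟨fun hi => ⟨Finset.mem_univ _, hi⟩, fun hi => hi.2⟩
        have hcross := hinv t (y t) (hy t)
        rw [hIio] at hcross
        have hnorm : ‖f t + ∑ i ∈ F n, f i‖ ^ 2 =
            ‖f t‖ ^ 2 + 2 * ⟪f t, ∑ i ∈ F n, f i⟫ + ‖∑ i ∈ F n, f i‖ ^ 2 := by
          rw [@norm_add_sq_real]
        have hft : ‖f t‖ ^ 2 = g t := by
          simp [hf, hg, norm_smul, mul_pow, mul_comm]
        have hinner : ⟪f t, ∑ i ∈ F n, f i⟫ =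
            (y t - p t) * ⟪Φ (x t) (p t), ∑ i ∈ F n, f i⟫ := by
          simp [hf, real_inner_smul_left]
        rw [hnorm, hft, hinner]
        nlinarith [hcross, ih]
      · have heq : F (n + 1) = F n := by
          ext i
          have := i.isLt
          simp only [hF, Finset.mem_filter, Finset.mem_univ, true_and]
          omega
        rw [heq]; exact ih
  have hFT : F T = Finset.univ := by
    ext i; simp [hF, i.isLt]
  have hS : ‖∑ i, f i‖ ^ 2 ≤ ∑ i, g i := by
    have := key T; rwa [hFT] at this
  have hsum : ∑ t, ⟪w, Φ (x t) (p t)⟫ * (y t - p t) = ⟪w, ∑ i, f i⟫ := by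
    rw [inner_sum]
    refine Finset.sum_congr rfl fun t _ => ?_
    simp [hf, real_inner_smul_right]; ring
  rw [hsum]
  calc |⟪w, ∑ i, f i⟫| ≤ ‖w‖ * ‖∑ i, f i‖ := abs_real_inner_le_norm _ _
    _ ≤ ‖w‖ * Real.sqrt (∑ i, g i) := by
        gcongr
        rw [show ‖∑ i, f i‖ = Real.sqrt (‖∑ i, f i‖ ^ 2) by
          rw [Real.sqrt_sq (norm_nonneg _)]]
        exact Real.sqrt_le_sqrt hS
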